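/- Let I be an ideal of A and G ⊆ I. Then G is an SG-basis for I if and only if for every h ∈ I, every final si-reductum of h via G is 0. -/

import Mathlib

open MvPolynomial

/-- A term order on the monomials (exponent vectors) of a polynomial ring in `n`
variables: a well-founded linear order compatible with multiplication of power
products (i.e. with addition of exponent vectors). -/
structure TermOrder (n : ℕ) where
  lo : LinearOrder (Fin n →₀ ℕ)
  wf : WellFounded lo.lt
  add_le_add : ∀ a b c : Fin n →₀ ℕ, lo.le a b → lo.le (a + c) (b + c)

namespace TermOrder

variable {n : ℕ} {R : Type*} [CommRing R]

/-- `lp p`: the leading power product (exponent vector) of `p`; junk value `0`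
for the zero polynomial. -/
noncomputable def lp (ord : TermOrder n) (p : MvPolynomial (Fin n) R) : Fin n →₀ ℕ :=
  WithBot.unbotD 0 (@Finset.max _ ord.lo p.support)

/-- `lc p`: the leading coefficient of `p` (0 if `p = 0`). -/
noncomputable def lc (ord : TermOrder n) (p : MvPolynomial (Fin n) R) : R :=
  p.coeff (ord.lp p)

/-- `ltm p`: the leading term `lc(p)·lp(p)` of `p` (0 if `p = 0`). -/
noncomputable def ltm (ord : TermOrder n) (p : MvPolynomial (Fin n) R) : MvPolynomial (Fin n) R :=
  monomial (ord.lp p) (ord.lc p)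

end TermOrder

variable {n : ℕ} {R : Type*} [CommRing R]

/-- An `F`-power product: a finite product `∏ fᵢ^{eᵢ}` with `fᵢ ∈ F`. -/
def IsPowerProduct (F : Set (MvPolynomial (Fin n) R)) (q : MvPolynomial (Fin n) R) : Prop :=
  ∃ e : MvPolynomial (Fin n) R →₀ ℕ, (e.support : Set (MvPolynomial (Fin n) R)) ⊆ F ∧
    q = e.prod (fun f k => f ^ k)

/-- `F` is a SAGBI basis for the `R`-subalgebra `A`: `R[Lt A] = R[Lt F]`. -/
def IsSAGBI (ord : TermOrder n) (A : Subalgebra R (MvPolynomial (Fin n) R))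
    (F : Set (MvPolynomial (Fin n) R)) : Prop :=
  Algebra.adjoin R (ord.ltm '' (A : Set (MvPolynomial (Fin n) R))) =
    Algebra.adjoin R (ord.ltm '' F)

/-- One step of s-reduction of `g` to `h` via `F`. -/
def SStep (ord : TermOrder n) (F : Set (MvPolynomial (Fin n) R))
    (g h : MvPolynomial (Fin n) R) : Prop :=
  ∃ (β : Fin n →₀ ℕ) (N : ℕ) (q : Fin N → MvPolynomial (Fin n) R) (r : Fin N → R),
    g.coeff β ≠ 0 ∧
    (∀ i, IsPowerProduct F (q i) ∧ q i ≠ 0 ∧ ord.lp (q i) = β) ∧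
    g.coeff β = ∑ i, r i * ord.lc (q i) ∧
    h = g - ∑ i, C (r i) * q i

/-- `g` s-reduces to `h` via `F`: a finite chain of one-step s-reductions. -/
def SReduce (ord : TermOrder n) (F : Set (MvPolynomial (Fin n) R)) :
    MvPolynomial (Fin n) R → MvPolynomial (Fin n) R → Prop :=
  Relation.ReflTransGen (SStep ord F)

/-- One step of si-reduction of `h` to `h'` via `G`, relative to the subalgebra `A`. -/
def SiStep (ord : TermOrder n) (A : Subalgebra R (MvPolynomial (Fin n) R))
    (G : Set (MvPolynomial (Fin n) R)) (h h' : MvPolynomial (Fin n) R) : Prop :=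
  ∃ (α : Fin n →₀ ℕ) (M : ℕ) (g a : Fin M → MvPolynomial (Fin n) R),
    h.coeff α ≠ 0 ∧
    (∀ i, g i ∈ G) ∧ (∀ i, a i ∈ A) ∧
    (∀ i, a i * g i ≠ 0 ∧ ord.lp (a i * g i) = α) ∧
    (monomial α (h.coeff α) : MvPolynomial (Fin n) R) = ∑ i, ord.ltm (a i * g i) ∧
    h' = h - ∑ i, a i * g i

/-- `h` si-reduces to `h'` via `G`: a finite chain of one-step si-reductions. -/
def SiReduce (ord : TermOrder n) (A : Subalgebra R (MvPolynomial (Fin n) R))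
    (G : Set (MvPolynomial (Fin n) R)) :
    MvPolynomial (Fin n) R → MvPolynomial (Fin n) R → Prop :=
  Relation.ReflTransGen (SiStep ord A G)

/-- The subalgebra `R[Lt A]` generated by the leading terms of elements of `A`. -/
noncomputable def LtAlg (ord : TermOrder n) (A : Subalgebra R (MvPolynomial (Fin n) R)) :
    Subalgebra R (MvPolynomial (Fin n) R) :=
  Algebra.adjoin R (ord.ltm '' (A : Set (MvPolynomial (Fin n) R)))

/-- The leading term of an element of `A`, as an element of `R[Lt A]`. -/
noncomputable def ltA (ord : TermOrder n) (A : Subalgebra R (MvPolynomial (Fin n) R))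
    (a : A) : LtAlg ord A :=
  ⟨ord.ltm (a : MvPolynomial (Fin n) R), Algebra.subset_adjoin ⟨a, a.2, rfl⟩⟩

/-- `G ⊆ I` is a SAGBI–Gröbner basis (SG-basis) for the ideal `I` of `A`:
`Lt G` generates the ideal `⟨Lt I⟩` in the subalgebra `R[Lt A]`. -/
def IsSGBasis (ord : TermOrder n) (A : Subalgebra R (MvPolynomial (Fin n) R))
    (I : Ideal A) (G : Set A) : Prop :=
  Ideal.span
      ((Subtype.val ⁻¹' (ord.ltm '' (Subtype.val '' G)) : Set (LtAlg ord A))) =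
  Ideal.span
      ((Subtype.val ⁻¹' (ord.ltm '' (Subtype.val '' (I : Set A))) : Set (LtAlg ord A)))

section Basics

open TermOrder

variable {n : ℕ} {R : Type*} [CommRing R] (ord : TermOrder n)

private lemma TO.le_total (a b : Fin n →₀ ℕ) : ord.lo.le a b ∨ ord.lo.le b a :=
  ord.lo.le_total a b

private lemma TO.lt_of_le_of_ne {a b : Fin n →₀ ℕ} (h : ord.lo.le a b) (hne : a ≠ b) :
    ord.lo.lt a b := by
  rw [ord.lo.lt_iff_le_not_ge]
  exact ⟨h, fun h' => hne (ord.lo.le_antisymm a b h h')⟩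

private lemma TO.le_of_lt {a b : Fin n →₀ ℕ} (h : ord.lo.lt a b) : ord.lo.le a b :=
  ((ord.lo.lt_iff_le_not_ge a b).mp h).1

private lemma TO.not_lt_of_le {a b : Fin n →₀ ℕ} (h : ord.lo.le a b) : ¬ ord.lo.lt b a :=
  fun h' => ((ord.lo.lt_iff_le_not_ge b a).mp h').2 h

private lemma TO.le_of_not_lt {a b : Fin n →₀ ℕ} (h : ¬ ord.lo.lt a b) : ord.lo.le b a := by
  rcases TO.le_total ord b a with h' | h'
  · exact h'
  · rcases eq_or_ne a b with rfl | hne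
    · exact ord.lo.le_refl a
    · exact absurd (TO.lt_of_le_of_ne ord h' hne) h

private lemma TO.lt_trans {a b c : Fin n →₀ ℕ} (h : ord.lo.lt a b) (h' : ord.lo.lt b c) :
    ord.lo.lt a c := by
  refine TO.lt_of_le_of_ne ord (ord.lo.le_trans _ _ _ (TO.le_of_lt ord h) (TO.le_of_lt ord h')) ?_
  rintro rfl
  exact TO.not_lt_of_le ord (TO.le_of_lt ord h) h'

private lemma TO.ne_of_lt {a b : Fin n →₀ ℕ} (h : ord.lo.lt a b) : a ≠ b := by
  rintro rfl; exact TO.not_lt_of_le ord (ord.lo.le_refl a) h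

private lemma TO.lt_of_le_of_lt {a b c : Fin n →₀ ℕ} (h : ord.lo.le a b) (h' : ord.lo.lt b c) :
    ord.lo.lt a c := by
  rcases eq_or_ne a b with rfl | hne
  · exact h'
  · exact TO.lt_trans ord (TO.lt_of_le_of_ne ord h hne) h'

private lemma TO.add_lt_add {a b : Fin n →₀ ℕ} (h : ord.lo.lt a b) (c : Fin n →₀ ℕ) :
    ord.lo.lt (a + c) (b + c) := by
  refine TO.lt_of_le_of_ne ord (ord.add_le_add a b c (TO.le_of_lt ord h)) ?_
  intro he
  exact TO.ne_of_lt ord h (add_right_cancel he)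

private lemma TO.lt_of_lt_of_le {a b c : Fin n →₀ ℕ} (h : ord.lo.lt a b) (h' : ord.lo.le b c) :
    ord.lo.lt a c := by
  rcases eq_or_ne b c with rfl | hne
  · exact h
  · exact TO.lt_trans ord h (TO.lt_of_le_of_ne ord h' hne)

private lemma TO.add_lt_add_of_le_of_lt {u a v b : Fin n →₀ ℕ} (h1 : ord.lo.le u a)
    (h2 : ord.lo.lt v b) : ord.lo.lt (u + v) (a + b) := by
  have h3 : ord.lo.le (u + v) (a + v) := by
    have := ord.add_le_add u a v h1; exact this
  have h4 : ord.lo.lt (a + v) (a + b) := by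
    have := TO.add_lt_add ord h2 a
    rwa [add_comm v a, add_comm b a] at this
  exact TO.lt_of_le_of_lt ord h3 h4

private lemma TO.add_le_add2 {u a v b : Fin n →₀ ℕ} (h1 : ord.lo.le u a)
    (h2 : ord.lo.le v b) : ord.lo.le (u + v) (a + b) := by
  refine ord.lo.le_trans _ (a + v) _ (ord.add_le_add u a v h1) ?_
  have := ord.add_le_add v b a h2
  rwa [add_comm v a, add_comm b a] at this

variable {p q : MvPolynomial (Fin n) R}

lemma lp_mem_support (hp : p ≠ 0) : ord.lp p ∈ p.support := by
  obtain ⟨m, hm⟩ := @Finset.max_of_nonempty _ ord.lo _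
    (MvPolynomial.support_nonempty.mpr hp)
  have : ord.lp p = m := by rw [TermOrder.lp, hm]; rfl
  rw [this]
  exact @Finset.mem_of_max _ ord.lo _ _ hm

lemma le_lp' (hp : p ≠ 0) (β : Fin n →₀ ℕ) (hβ : β ∈ p.support) :
    ord.lo.le β (ord.lp p) := by
  obtain ⟨m, hm⟩ := @Finset.max_of_nonempty _ ord.lo _
    (MvPolynomial.support_nonempty.mpr hp)
  have hlp : ord.lp p = m := by rw [TermOrder.lp, hm]; rfl
  have := @Finset.le_max _ ord.lo _ _ hβ
  rw [hm] at this
  rw [hlp]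
  exact_mod_cast this

lemma coeff_eq_zero_of_lp_lt {β : Fin n →₀ ℕ} (h : ord.lo.lt (ord.lp p) β) :
    p.coeff β = 0 := by
  by_contra hc
  rcases eq_or_ne p 0 with rfl | hp
  · exact hc (by simp)
  · exact TO.not_lt_of_le ord (le_lp' ord hp β (MvPolynomial.mem_support_iff.mpr hc)) h

lemma lc_ne_zero (hp : p ≠ 0) : ord.lc p ≠ 0 :=
  MvPolynomial.mem_support_iff.mp (lp_mem_support ord hp)

lemma ltm_zero : ord.ltm (0 : MvPolynomial (Fin n) R) = 0 := by
  have : ord.lc (0 : MvPolynomial (Fin n) R) = 0 := by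
    simp [TermOrder.lc]
  rw [TermOrder.ltm, this, MvPolynomial.monomial_zero]

lemma ltm_eq_zero_iff : ord.ltm p = 0 ↔ p = 0 := by
  constructor
  · intro h
    by_contra hp
    have := lc_ne_zero ord hp
    rw [TermOrder.ltm, MvPolynomial.monomial_eq_zero] at h
    exact this h
  · rintro rfl; exact ltm_zero ord

lemma lp_eq_of {μ : Fin n →₀ ℕ} (hmem : μ ∈ p.support)
    (hub : ∀ γ ∈ p.support, ord.lo.le γ μ) : ord.lp p = μ := by
  have hp : p ≠ 0 := fun h => by simp [h] at hmem
  exact ord.lo.le_antisymm _ _ (hub _ (lp_mem_support ord hp)) (le_lp' ord hp μ hmem)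

end Basics
section Mul

set_option linter.unusedSectionVars false

open TermOrder

variable {n : ℕ} {R : Type*} [CommRing R] [IsDomain R] (ord : TermOrder n)
variable {p q : MvPolynomial (Fin n) R}

set_option maxHeartbeats 1000000 in
lemma coeff_mul_lp_add_lp (hp : p ≠ 0) (hq : q ≠ 0) :
    (p * q).coeff (ord.lp p + ord.lp q) = ord.lc p * ord.lc q := by
  rw [MvPolynomial.coeff_mul]
  rw [Finset.sum_eq_single (ord.lp p, ord.lp q)]
  · show p.coeff (ord.lp p) * q.coeff (ord.lp q) = ord.lc p * ord.lc q
    rfl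
  · rintro ⟨u, v⟩ hmem hne
    rw [Finset.HasAntidiagonal.mem_antidiagonal] at hmem
    by_contra hc
    have hu : u ∈ p.support := MvPolynomial.mem_support_iff.mpr fun h => hc (by simp [h])
    have hv : v ∈ q.support := MvPolynomial.mem_support_iff.mpr fun h => hc (by simp [h])
    have hu' := le_lp' ord hp u hu
    have hv' := le_lp' ord hq v hv
    have hlt : ord.lo.lt (u + v) (ord.lp p + ord.lp q) := by
      by_cases hcase : u = ord.lp p
      · have hv'' : ord.lo.lt v (ord.lp q) := by
          refine TO.lt_of_le_of_ne ord hv' (fun h => hne ?_)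
          simp only [Prod.mk.injEq]; exact ⟨hcase, h⟩
        exact TO.add_lt_add_of_le_of_lt ord hu' hv''
      · have hu'' : ord.lo.lt u (ord.lp p) := TO.lt_of_le_of_ne ord hu' hcase
        rw [add_comm u v, add_comm (ord.lp p) (ord.lp q)]
        exact TO.add_lt_add_of_le_of_lt ord hv' hu''
    rw [hmem] at hlt
    exact TO.ne_of_lt ord hlt rfl
  · intro h
    simp [Finset.HasAntidiagonal.mem_antidiagonal] at h

lemma lp_mul (hp : p ≠ 0) (hq : q ≠ 0) : ord.lp (p * q) = ord.lp p + ord.lp q := by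
  refine lp_eq_of ord ?_ ?_
  · rw [MvPolynomial.mem_support_iff, coeff_mul_lp_add_lp ord hp hq]
    exact mul_ne_zero (lc_ne_zero ord hp) (lc_ne_zero ord hq)
  · intro γ hγ
    rw [MvPolynomial.mem_support_iff, MvPolynomial.coeff_mul] at hγ
    obtain ⟨⟨u, v⟩, hmem, hne⟩ := Finset.exists_ne_zero_of_sum_ne_zero hγ
    rw [Finset.HasAntidiagonal.mem_antidiagonal] at hmem
    have hu : u ∈ p.support := MvPolynomial.mem_support_iff.mpr fun h => hne (by simp [h])
    have hv : v ∈ q.support := MvPolynomial.mem_support_iff.mpr fun h => hne (by simp [h])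
    rw [← hmem]
    exact TO.add_le_add2 ord (le_lp' ord hp u hu) (le_lp' ord hq v hv)

lemma lc_mul (hp : p ≠ 0) (hq : q ≠ 0) : ord.lc (p * q) = ord.lc p * ord.lc q := by
  rw [TermOrder.lc, lp_mul ord hp hq]
  exact coeff_mul_lp_add_lp ord hp hq

lemma ltm_mul (p q : MvPolynomial (Fin n) R) : ord.ltm (p * q) = ord.ltm p * ord.ltm q := by
  rcases eq_or_ne p 0 with rfl | hp
  · simp [ltm_zero]
  rcases eq_or_ne q 0 with rfl | hq
  · simp [ltm_zero]
  rw [TermOrder.ltm, TermOrder.ltm, TermOrder.ltm, lp_mul ord hp hq, lc_mul ord hp hq,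
    MvPolynomial.monomial_mul]

lemma ltm_C (r : R) : ord.ltm (MvPolynomial.C r : MvPolynomial (Fin n) R) = MvPolynomial.C r := by
  rcases eq_or_ne r 0 with rfl | hr
  · simp [ltm_zero]
  · have hne : (MvPolynomial.C r : MvPolynomial (Fin n) R) ≠ 0 := by
      simpa using hr
    have hlp : ord.lp (MvPolynomial.C r : MvPolynomial (Fin n) R) = 0 := by
      refine lp_eq_of ord ?_ ?_
      · simpa [MvPolynomial.mem_support_iff] using hr
      · intro γ hγ
        rw [MvPolynomial.mem_support_iff, MvPolynomial.coeff_C] at hγ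
        rcases eq_or_ne (0 : Fin n →₀ ℕ) γ with rfl | hne'
        · exact ord.lo.le_refl _
        · simp [hne'] at hγ
    have hlc : ord.lc (MvPolynomial.C r : MvPolynomial (Fin n) R) = r := by
      rw [TermOrder.lc, hlp]; simp
    rw [TermOrder.ltm, hlp, hlc, MvPolynomial.monomial_zero']

lemma ltm_one : ord.ltm (1 : MvPolynomial (Fin n) R) = 1 := by
  have := ltm_C ord (1 : R)
  simpa using this

lemma C_mul_ltm_mul_ltm (r : R) (a w : MvPolynomial (Fin n) R) :
    MvPolynomial.C r * ord.ltm a * ord.ltm w = ord.ltm (MvPolynomial.C r * a * w) := by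
  rw [ltm_mul, ltm_mul, ltm_C]

end Mul
section Alg

set_option linter.unusedSectionVars false
set_option synthInstance.maxHeartbeats 1000000
set_option maxHeartbeats 1000000

open TermOrder

variable {n : ℕ} {R : Type*} [CommRing R] [IsDomain R] (ord : TermOrder n)
variable (A : Subalgebra R (MvPolynomial (Fin n) R))

/-- The image of `A` under `ltm` is a submonoid (since `R` is a domain). -/
noncomputable def ltmMonoid : Submonoid (MvPolynomial (Fin n) R) where
  carrier := ord.ltm '' (A : Set (MvPolynomial (Fin n) R))
  one_mem' := ⟨1, A.one_mem, ltm_one ord⟩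
  mul_mem' := by
    rintro x y ⟨a, ha, rfl⟩ ⟨b, hb, rfl⟩
    exact ⟨a * b, A.mul_mem ha hb, ltm_mul ord a b⟩

lemma mem_ltAlg_iff_span {c : MvPolynomial (Fin n) R} :
    c ∈ LtAlg ord A ↔
      c ∈ Submodule.span R (ord.ltm '' (A : Set (MvPolynomial (Fin n) R))) := by
  have hcl : Submonoid.closure (ord.ltm '' (A : Set (MvPolynomial (Fin n) R)))
      = ltmMonoid ord A := Submonoid.closure_eq (ltmMonoid ord A)
  rw [LtAlg, ← Subalgebra.mem_toSubmodule, Algebra.adjoin_eq_span, hcl]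
  rfl

lemma exists_ltAlg_rep {c : MvPolynomial (Fin n) R} (hc : c ∈ LtAlg ord A) :
    ∃ (m : ℕ) (r : Fin m → R) (a : Fin m → MvPolynomial (Fin n) R),
      (∀ k, a k ∈ A) ∧ c = ∑ k, MvPolynomial.C (r k) * ord.ltm (a k) := by
  rw [mem_ltAlg_iff_span] at hc
  obtain ⟨m, f, g, hsum⟩ := Submodule.mem_span_set'.mp hc
  have hch : ∀ k, ∃ a, a ∈ A ∧ ord.ltm a = (g k : MvPolynomial (Fin n) R) := fun k => by
    obtain ⟨a, ha, hea⟩ := (g k).2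
    exact ⟨a, ha, hea⟩
  choose a haA hltm using hch
  refine ⟨m, f, a, haA, ?_⟩
  rw [← hsum]
  refine Finset.sum_congr rfl fun k _ => ?_
  rw [MvPolynomial.smul_eq_C_mul, hltm]

lemma mem_span_of_rep (G : Set A) {p : MvPolynomial (Fin n) R}
    (hmem : ord.ltm p ∈ LtAlg ord A)
    {M : ℕ} {g a : Fin M → MvPolynomial (Fin n) R}
    (hg : ∀ i, g i ∈ Subtype.val '' G) (ha : ∀ i, a i ∈ A)
    (heq : ord.ltm p = ∑ i, ord.ltm (a i * g i)) :
    (⟨ord.ltm p, hmem⟩ : LtAlg ord A) ∈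
      Ideal.span ((Subtype.val ⁻¹' (ord.ltm '' (Subtype.val '' G)) : Set (LtAlg ord A))) := by
  have hgA : ∀ i, g i ∈ A := fun i => by
    obtain ⟨g0, _, he⟩ := hg i
    rw [← he]; exact g0.2
  set x : Fin M → LtAlg ord A := fun i =>
    ⟨ord.ltm (a i), Algebra.subset_adjoin ⟨a i, ha i, rfl⟩⟩ with hx
  set y : Fin M → LtAlg ord A := fun i =>
    ⟨ord.ltm (g i), Algebra.subset_adjoin ⟨g i, hgA i, rfl⟩⟩ with hy
  have hkey : (⟨ord.ltm p, hmem⟩ : LtAlg ord A) = ∑ i, x i * y i := by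
    apply Subtype.ext
    push_cast
    rw [heq]
    refine Finset.sum_congr rfl fun i _ => ?_
    rw [ltm_mul]
  rw [hkey]
  refine Submodule.sum_mem _ fun i _ => ?_
  refine Ideal.mul_mem_left _ _ (Ideal.subset_span ?_)
  show (y i : MvPolynomial (Fin n) R) ∈ ord.ltm '' (Subtype.val '' G)
  exact ⟨g i, hg i, rfl⟩

end Alg
section Step

set_option linter.unusedSectionVars false
set_option synthInstance.maxHeartbeats 1000000
set_option maxHeartbeats 1000000

open TermOrder

variable {n : ℕ} {R : Type*} [CommRing R] [IsDomain R] (ord : TermOrder n)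
variable (A : Subalgebra R (MvPolynomial (Fin n) R))

open scoped Classical in
lemma sum_ltm_filter {T : Type*} [Fintype T] (u : T → MvPolynomial (Fin n) R)
    {μ : Fin n →₀ ℕ} {c : R}
    (htot : (MvPolynomial.monomial μ c : MvPolynomial (Fin n) R) = ∑ j, ord.ltm (u j)) :
    (MvPolynomial.monomial μ c : MvPolynomial (Fin n) R)
      = ∑ j ∈ Finset.univ.filter (fun j => u j ≠ 0 ∧ ord.lp (u j) = μ), ord.ltm (u j) := by
  classical
  rw [Finset.sum_filter]
  have h2 : c = ∑ j : T, (if u j ≠ 0 ∧ ord.lp (u j) = μ then ord.lc (u j) else 0) := by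
    have hc := congrArg (MvPolynomial.coeff μ) htot
    rw [MvPolynomial.coeff_monomial, if_pos rfl, MvPolynomial.coeff_sum] at hc
    rw [hc]
    refine Finset.sum_congr rfl fun j _ => ?_
    rw [TermOrder.ltm, MvPolynomial.coeff_monomial]
    by_cases hz : u j = 0
    · rw [hz]
      have h0 : ord.lc (0 : MvPolynomial (Fin n) R) = 0 := by simp [TermOrder.lc]
      simp [h0]
    · by_cases hl : ord.lp (u j) = μ
      · simp [hl, hz]
      · simp [hl, hz]
  have h1 : ∑ j : T, (if u j ≠ 0 ∧ ord.lp (u j) = μ then ord.ltm (u j) else 0)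
      = (MvPolynomial.monomial μ
          (∑ j : T, if u j ≠ 0 ∧ ord.lp (u j) = μ then ord.lc (u j) else 0)
        : MvPolynomial (Fin n) R) := by
    rw [map_sum]
    refine Finset.sum_congr rfl fun j _ => ?_
    by_cases hcond : u j ≠ 0 ∧ ord.lp (u j) = μ
    · rw [if_pos hcond, if_pos hcond, TermOrder.ltm, hcond.2]
    · rw [if_neg hcond, if_neg hcond, map_zero]
  rw [h1, ← h2]

lemma exists_sistep (G : Set A) {p : MvPolynomial (Fin n) R} (hp : p ≠ 0)
    (hmem : ord.ltm p ∈ LtAlg ord A)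
    (hspan : (⟨ord.ltm p, hmem⟩ : LtAlg ord A) ∈
      Ideal.span ((Subtype.val ⁻¹' (ord.ltm '' (Subtype.val '' G)) : Set (LtAlg ord A)))) :
    ∃ p₂, SiStep ord A (Subtype.val '' G) p p₂ := by
  classical
  obtain ⟨m, f, gg, hsum⟩ := Submodule.mem_span_set'.mp hspan
  simp only [smul_eq_mul] at hsum
  have hwch : ∀ i, ∃ v, v ∈ Subtype.val '' G ∧
      ord.ltm v = ((gg i : LtAlg ord A) : MvPolynomial (Fin n) R) := by
    intro i
    obtain ⟨v, hv, he⟩ := (gg i).2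
    exact ⟨v, hv, he⟩
  choose w hwG hwe using hwch
  have hrep := fun i => exists_ltAlg_rep ord A (f i).2
  choose mm rr aa haA hfeq using hrep
  have htot : ord.ltm p = ∑ i, ∑ k, ord.ltm ((MvPolynomial.C (rr i k) * aa i k) * w i) := by
    have hval := congrArg (Subalgebra.val (LtAlg ord A)) hsum
    rw [map_sum] at hval
    have hval' : ∑ i, ((f i : MvPolynomial (Fin n) R)
        * ((gg i : LtAlg ord A) : MvPolynomial (Fin n) R)) = ord.ltm p := hval
    rw [← hval']
    refine Finset.sum_congr rfl fun i _ => ?_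
    rw [hfeq i, ← hwe i, Finset.sum_mul]
    refine Finset.sum_congr rfl fun k _ => ?_
    rw [C_mul_ltm_mul_ltm]
  set u : (Σ i : Fin m, Fin (mm i)) → MvPolynomial (Fin n) R :=
    fun j => (MvPolynomial.C (rr j.1 j.2) * aa j.1 j.2) * w j.1 with hu
  have hflat : (MvPolynomial.monomial (ord.lp p) (ord.lc p) : MvPolynomial (Fin n) R)
      = ∑ j, ord.ltm (u j) := by
    rw [← TermOrder.ltm, htot, ← Finset.univ_sigma_univ, Finset.sum_sigma]
  have hmono := sum_ltm_filter ord u hflat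
  set s : Finset (Σ i : Fin m, Fin (mm i)) :=
    Finset.univ.filter (fun j => u j ≠ 0 ∧ ord.lp (u j) = ord.lp p) with hs
  have hprop : ∀ x : {x // x ∈ s}, u x.1 ≠ 0 ∧ ord.lp (u x.1) = ord.lp p := by
    intro x
    have hx : x.1 ∈ Finset.univ.filter
        (fun j => u j ≠ 0 ∧ ord.lp (u j) = ord.lp p) := x.2
    exact (Finset.mem_filter.mp hx).2
  set e : Fin s.card ≃ {x // x ∈ s} := s.equivFin.symm with he
  refine ⟨p - ∑ i0 : Fin s.card, u (e i0).1, ord.lp p, s.card,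
    fun i0 => w (e i0).1.1,
    fun i0 => MvPolynomial.C (rr (e i0).1.1 (e i0).1.2) * aa (e i0).1.1 (e i0).1.2,
    ?_, ?_, ?_, ?_, ?_, rfl⟩
  · exact lc_ne_zero ord hp
  · intro i0; exact hwG _
  · intro i0
    refine A.mul_mem ?_ (haA _ _)
    rw [← MvPolynomial.algebraMap_eq]
    exact A.algebraMap_mem _
  · intro i0
    exact hprop (e i0)
  · have hsum1 : ∑ i0 : Fin s.card, ord.ltm (u (e i0).1)
        = ∑ x : {x // x ∈ s}, ord.ltm (u x.1) :=
      Fintype.sum_equiv e _ _ (fun i0 => rfl)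
    have hsum2 : ∑ x : {x // x ∈ s}, ord.ltm (u x.1) = ∑ j ∈ s, ord.ltm (u j) :=
      Finset.sum_coe_sort s (fun j => ord.ltm (u j))
    show (MvPolynomial.monomial (ord.lp p) (ord.lc p) : MvPolynomial (Fin n) R)
      = ∑ i0 : Fin s.card, ord.ltm (u (e i0).1)
    rw [hsum1, hsum2]
    exact hmono

end Step
section WF

set_option linter.unusedSectionVars false

open TermOrder

variable {n : ℕ} {R : Type*} [CommRing R] (ord : TermOrder n)

open scoped Classical in
/-- The support indicator of a polynomial, as a finitely supported function. -/
noncomputable def indic (p : MvPolynomial (Fin n) R) : (Fin n →₀ ℕ) →₀ ℕ :=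
  Finsupp.onFinset p.support (fun β => if p.coeff β = 0 then 0 else 1)
    (fun β h => MvPolynomial.mem_support_iff.mpr (by
      intro hc; simp [hc] at h))

open scoped Classical in
lemma indic_apply (p : MvPolynomial (Fin n) R) (β : Fin n →₀ ℕ) :
    indic p β = if p.coeff β = 0 then 0 else 1 := rfl

/-- The well-founded relation on polynomials used for termination of the
span-membership argument. -/
def polyRel (p₂ p : MvPolynomial (Fin n) R) : Prop :=
  Finsupp.Lex (fun b a => ord.lo.lt a b) (· < ·) (indic p₂) (indic p)

lemma polyRel_wf : WellFounded (polyRel (R := R) ord) := by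
  haveI : IsTrichotomous (Fin n →₀ ℕ) (fun b a => ord.lo.lt a b) := by
    constructor
    intro a b
    letI := ord.lo
    intro h1 h2
    exact ord.lo.le_antisymm a b (TO.le_of_not_lt ord h1) (TO.le_of_not_lt ord h2)
  have hwf : WellFounded (Finsupp.Lex (fun b a : Fin n →₀ ℕ => ord.lo.lt a b)
      ((· < ·) : ℕ → ℕ → Prop)) := by
    refine Finsupp.Lex.wellFounded' (fun k h => Nat.not_lt_zero k h) ?_ ?_
    · exact wellFounded_lt
    · exact ord.wf
  exact InvImage.wf indic hwf

lemma polyRel_of_step {p₂ p : MvPolynomial (Fin n) R} {α : Fin n →₀ ℕ}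
    (hagree : ∀ β, ord.lo.lt α β → p₂.coeff β = p.coeff β)
    (hz : p₂.coeff α = 0) (hnz : p.coeff α ≠ 0) : polyRel ord p₂ p := by
  rw [polyRel, Finsupp.lex_def]
  refine ⟨α, fun β hβ => ?_, ?_⟩
  · rw [indic_apply, indic_apply, hagree β hβ]
  · rw [indic_apply, indic_apply, if_pos hz, if_neg hnz]
    exact Nat.zero_lt_one

end WF
section Main

set_option linter.unusedSectionVars false
set_option synthInstance.maxHeartbeats 1000000
set_option maxHeartbeats 1000000

open TermOrder

variable {n : ℕ} {R : Type*} [CommRing R] [IsDomain R] (ord : TermOrder n)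
variable (A : Subalgebra R (MvPolynomial (Fin n) R)) (I : Ideal A) (G : Set A)

lemma sistep_mem (hGI : G ⊆ (I : Set A)) {b c : MvPolynomial (Fin n) R}
    (hb : ∃ k, k ∈ I ∧ (k : MvPolynomial (Fin n) R) = b)
    (hst : SiStep ord A (Subtype.val '' G) b c) :
    ∃ k, k ∈ I ∧ (k : MvPolynomial (Fin n) R) = c := by
  obtain ⟨k, hkI, rfl⟩ := hb
  obtain ⟨α, M, g, a, hcoeff, hgG, haA, hlpprod, hmono, hc⟩ := hst
  choose g0 hg0 he0 using hgG
  refine ⟨k - ∑ i, ⟨a i, haA i⟩ * g0 i, ?_, ?_⟩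
  · exact I.sub_mem hkI (Submodule.sum_mem _ fun i _ => I.mul_mem_left _ (hGI (hg0 i)))
  · rw [hc]
    show (A.val (k - ∑ i, ⟨a i, haA i⟩ * g0 i) : MvPolynomial (Fin n) R) = _
    rw [map_sub, map_sum]
    congr 1
    refine Finset.sum_congr rfl fun i _ => ?_
    rw [map_mul]
    show a i * (g0 i : MvPolynomial (Fin n) R) = a i * g i
    rw [he0 i]

lemma sireduce_mem (hGI : G ⊆ (I : Set A)) {b c : MvPolynomial (Fin n) R}
    (hb : ∃ k, k ∈ I ∧ (k : MvPolynomial (Fin n) R) = b)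
    (hr : SiReduce ord A (Subtype.val '' G) b c) :
    ∃ k, k ∈ I ∧ (k : MvPolynomial (Fin n) R) = c := by
  induction hr with
  | refl => exact hb
  | tail hab hbc ih => exact sistep_mem ord A I G hGI ih hbc

lemma ltm_mem_span_of_red (hGI : G ⊆ (I : Set A))
    (hred : ∀ h : A, h ∈ I → ∀ h' : MvPolynomial (Fin n) R,
        SiReduce ord A (Subtype.val '' G) (h : MvPolynomial (Fin n) R) h' →
        (∀ h'' : MvPolynomial (Fin n) R, ¬ SiStep ord A (Subtype.val '' G) h' h'') →
        h' = 0)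
    (p : MvPolynomial (Fin n) R) :
    ∀ (k : A), k ∈ I → (k : MvPolynomial (Fin n) R) = p → p ≠ 0 →
      ∀ (hmem : ord.ltm p ∈ LtAlg ord A),
        (⟨ord.ltm p, hmem⟩ : LtAlg ord A) ∈ Ideal.span
          ((Subtype.val ⁻¹' (ord.ltm '' (Subtype.val '' G)) : Set (LtAlg ord A))) := by
  refine WellFounded.induction (polyRel_wf (R := R) ord)
    (C := fun p => ∀ (k : A), k ∈ I → (k : MvPolynomial (Fin n) R) = p → p ≠ 0 →
      ∀ (hmem : ord.ltm p ∈ LtAlg ord A),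
        (⟨ord.ltm p, hmem⟩ : LtAlg ord A) ∈ Ideal.span
          ((Subtype.val ⁻¹' (ord.ltm '' (Subtype.val '' G)) : Set (LtAlg ord A)))) p ?_
  clear p
  intro p IH k hkI hkp hp hmem
  have hstep : ∃ p₂, SiStep ord A (Subtype.val '' G) p p₂ := by
    by_contra hno
    push_neg at hno
    exact hp (hred k hkI p (by rw [hkp]; exact Relation.ReflTransGen.refl) hno)
  obtain ⟨p₂, hstep2⟩ := hstep
  have hstep2' := hstep2
  obtain ⟨α, M, g, a, hcoeff, hgG, haA, hlpprod, hmono, hp₂⟩ := hstep2'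
  have hαle : ord.lo.le α (ord.lp p) :=
    le_lp' ord hp α (MvPolynomial.mem_support_iff.mpr hcoeff)
  rcases eq_or_ne α (ord.lp p) with heq | hne
  · subst heq
    exact mem_span_of_rep ord A G hmem hgG haA (by rw [TermOrder.ltm]; exact hmono)
  · have hlt : ord.lo.lt α (ord.lp p) := TO.lt_of_le_of_ne ord hαle hne
    set q : MvPolynomial (Fin n) R := ∑ i, a i * g i with hq
    have hqhigh : ∀ β, ord.lo.lt α β → q.coeff β = 0 := by
      intro β hβ
      rw [hq, MvPolynomial.coeff_sum]
      refine Finset.sum_eq_zero fun i _ => ?_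
      refine coeff_eq_zero_of_lp_lt ord ?_
      rw [(hlpprod i).2]
      exact hβ
    have hqα : q.coeff α = p.coeff α := by
      have hc := congrArg (MvPolynomial.coeff α) hmono
      rw [MvPolynomial.coeff_monomial, if_pos rfl, MvPolynomial.coeff_sum] at hc
      rw [hq, MvPolynomial.coeff_sum, hc]
      refine Finset.sum_congr rfl fun i _ => ?_
      rw [TermOrder.ltm, MvPolynomial.coeff_monomial, if_pos (hlpprod i).2]
      rw [TermOrder.lc, (hlpprod i).2]
    have hagree : ∀ β, ord.lo.lt α β → p₂.coeff β = p.coeff β := by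
      intro β hβ
      rw [hp₂, MvPolynomial.coeff_sub, hqhigh β hβ, sub_zero]
    have hzα : p₂.coeff α = 0 := by
      rw [hp₂, MvPolynomial.coeff_sub, hqα, sub_self]
    have hp₂lp : p₂.coeff (ord.lp p) = p.coeff (ord.lp p) := hagree _ hlt
    have hp₂ne : p₂ ≠ 0 := by
      intro h0
      rw [h0] at hp₂lp
      exact lc_ne_zero ord hp (by rw [TermOrder.lc, ← hp₂lp]; simp)
    have hlpeq : ord.lp p₂ = ord.lp p := by
      refine lp_eq_of ord ?_ ?_
      · rw [MvPolynomial.mem_support_iff, hp₂lp]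
        exact lc_ne_zero ord hp
      · intro γ hγ
        by_contra hnle
        have hγne : γ ≠ ord.lp p := fun h => hnle (h ▸ ord.lo.le_refl γ)
        have hlpγ : ord.lo.lt (ord.lp p) γ := by
          rcases TO.le_total ord γ (ord.lp p) with h' | h'
          · exact absurd h' hnle
          · exact TO.lt_of_le_of_ne ord h' (fun h => hγne h.symm)
        have : p₂.coeff γ = 0 := by
          rw [hagree γ (TO.lt_trans ord hlt hlpγ)]
          exact coeff_eq_zero_of_lp_lt ord hlpγ
        exact MvPolynomial.mem_support_iff.mp hγ this
    have hltm_eq : ord.ltm p₂ = ord.ltm p := by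
      rw [TermOrder.ltm, TermOrder.ltm, hlpeq, TermOrder.lc, TermOrder.lc, hlpeq, hp₂lp]
    obtain ⟨k₂, hk₂I, hk₂e⟩ := sistep_mem ord A I G hGI ⟨k, hkI, hkp⟩ hstep2
    have hmem₂ : ord.ltm p₂ ∈ LtAlg ord A := by rw [hltm_eq]; exact hmem
    have hrel : polyRel ord p₂ p := polyRel_of_step ord hagree hzα hcoeff
    have hres := IH p₂ hrel k₂ hk₂I hk₂e hp₂ne hmem₂
    have hxeq : (⟨ord.ltm p, hmem⟩ : LtAlg ord A) = ⟨ord.ltm p₂, hmem₂⟩ :=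
      Subtype.ext hltm_eq.symm
    rw [hxeq]
    exact hres

end Main

set_option synthInstance.maxHeartbeats 1000000 in
set_option maxHeartbeats 1000000 in
/-- `G ⊆ I` is an SG-basis for the ideal `I` of `A` iff for every
`h ∈ I`, every final si-reductum of `h` via `G` is `0`. -/
theorem isSGBasis_iff_final_sireductum_eq_zero {n : ℕ} {R : Type*} [CommRing R]
    [IsDomain R] [IsNoetherianRing R] (ord : TermOrder n)
    (A : Subalgebra R (MvPolynomial (Fin n) R)) (I : Ideal A) (G : Set A)
    (hGI : G ⊆ (I : Set A)) :
    IsSGBasis ord A I G ↔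
      ∀ h : A, h ∈ I → ∀ h' : MvPolynomial (Fin n) R,
        SiReduce ord A (Subtype.val '' G) (h : MvPolynomial (Fin n) R) h' →
        (∀ h'' : MvPolynomial (Fin n) R, ¬ SiStep ord A (Subtype.val '' G) h' h'') →
        h' = 0 := by
  constructor
  · intro hSG h hI h' hrd hirr
    by_contra hne
    obtain ⟨k, hkI, hke⟩ := sireduce_mem ord A I G hGI ⟨h, hI, rfl⟩ hrd
    have hmem : ord.ltm h' ∈ LtAlg ord A := by
      rw [← hke]
      exact Algebra.subset_adjoin ⟨(k : MvPolynomial (Fin n) R), k.2, rfl⟩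
    have hmemI : (⟨ord.ltm h', hmem⟩ : LtAlg ord A) ∈ Ideal.span
        ((Subtype.val ⁻¹' (ord.ltm '' (Subtype.val '' (I : Set A))) : Set (LtAlg ord A))) := by
      refine Ideal.subset_span ?_
      show ord.ltm h' ∈ ord.ltm '' (Subtype.val '' (I : Set A))
      exact ⟨h', ⟨k, hkI, hke⟩, rfl⟩
    have hSG' : Ideal.span
        ((Subtype.val ⁻¹' (ord.ltm '' (Subtype.val '' G)) : Set (LtAlg ord A))) =
      Ideal.span
        ((Subtype.val ⁻¹' (ord.ltm '' (Subtype.val '' (I : Set A))) : Set (LtAlg ord A))) := hSG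
    rw [← hSG'] at hmemI
    obtain ⟨h'', hstep⟩ := exists_sistep ord A G hne hmem hmemI
    exact hirr h'' hstep
  · intro hred
    show Ideal.span _ = Ideal.span _
    refine le_antisymm ?_ ?_
    · exact Ideal.span_mono (Set.preimage_mono (Set.image_mono (Set.image_mono hGI)))
    · rw [Ideal.span_le]
      rintro x hx
      obtain ⟨w, hw, hwe⟩ := hx
      obtain ⟨k, hkI, rfl⟩ := hw
      rcases eq_or_ne ((k : MvPolynomial (Fin n) R)) 0 with h0 | h0
      · have hx0 : x = 0 := by
          apply Subtype.ext
          rw [← hwe, h0, ltm_zero]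
          rfl
        rw [hx0]; exact Submodule.zero_mem _
      · have hmem : ord.ltm (k : MvPolynomial (Fin n) R) ∈ LtAlg ord A :=
          Algebra.subset_adjoin ⟨(k : MvPolynomial (Fin n) R), k.2, rfl⟩
        have hres := ltm_mem_span_of_red ord A I G hGI hred
          (k : MvPolynomial (Fin n) R) k hkI rfl h0 hmem
        have hxeq : x = ⟨ord.ltm (k : MvPolynomial (Fin n) R), hmem⟩ := Subtype.ext hwe.symm
        rw [hxeq]; exact hres
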